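/- Let S be a folding string which satisfies properties 1) and 2). Then every complete S-folding curve is self-avoiding and covers arbitrarily large squares (for every m ∈ ℕ* there is a lattice square of side m such that every unit segment inside that square is the support of a segment of the curve). -/

import Mathlib

/- Common framework for paperfolding curves, coverings of the plane by such
curves, and the local isomorphism property, following F. Oger,
"The number of paperfolding curves in a covering of the plane". -/

namespace Paperfolding

/-- Lattice points: we identify ℝ² with ℂ and ℤ² with the Gaussian integers ℤ+iℤ. -/
abbrev Pt := ℤ × ℤ

/-- Multiplication by `i` (rotation by π/2) on ℤ². -/
def rot (v : Pt) : Pt := (-v.2, v.1)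

/-- Multiplication by `-i` (rotation by -π/2) on ℤ². -/
def rotInv (v : Pt) : Pt := (v.2, -v.1)

/-- `i^a` for `a = ±1`. -/
def rotBy (a : ℤ) (v : Pt) : Pt := if a = 1 then rot v else rotInv v

/-- Complex (Gaussian integer) multiplication on ℤ². -/
def cmul (u v : Pt) : Pt := (u.1 * v.1 - u.2 * v.2, u.1 * v.2 + u.2 * v.1)

/-- The four unit direction vectors `1, -1, i, -i`. -/
def IsUnitVec (v : Pt) : Prop := v = (1, 0) ∨ v = (-1, 0) ∨ v = (0, 1) ∨ v = (0, -1)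

/-- A curve: a (finite, one-sided infinite or bi-infinite) sequence of oriented unit
segments, the `k`-th segment going from `vertex k` to `vertex (k+1)` (for `k, k+1` in
the index interval `dom`), with a turn of ±π/2 at each interior vertex. -/
structure Curve where
  dom : Set ℤ
  isInterval : ∀ ⦃a b c : ℤ⦄, a ∈ dom → c ∈ dom → a ≤ b → b ≤ c → b ∈ dom
  nontrivial : ∃ k, k ∈ dom ∧ k + 1 ∈ dom
  vertex : ℤ → Pt
  step : ∀ k, k ∈ dom → k + 1 ∈ dom → IsUnitVec (vertex (k + 1) - vertex k)
  turn : ∀ k, k ∈ dom → k + 2 ∈ dom →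
    vertex (k + 2) - vertex (k + 1) = rot (vertex (k + 1) - vertex k) ∨
    vertex (k + 2) - vertex (k + 1) = rotInv (vertex (k + 1) - vertex k)

/-- A complete curve is indexed by all of ℤ. -/
def Curve.IsComplete (C : Curve) : Prop := C.dom = Set.univ

/-- `C` has a segment with index `k` (from `vertex k` to `vertex (k+1)`). -/
def Curve.HasSeg (C : Curve) (k : ℤ) : Prop := k ∈ C.dom ∧ k + 1 ∈ C.dom

/-- The curve `C` is associated to the sequence `b` (i.e. `ε_{k+1} = i^{b k} · ε_k`
for consecutive segments `k`, `k+1`). -/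
def Curve.AssocSeq (C : Curve) (b : ℤ → ℤ) : Prop :=
  ∀ k : ℤ, k ∈ C.dom → k + 2 ∈ C.dom →
    C.vertex (k + 2) - C.vertex (k + 1) = rotBy (b k) (C.vertex (k + 1) - C.vertex k)

/-- Segment `k` of `C` has the nonoriented unit segment `[z, z+e]` as support. -/
def SegSupports (C : Curve) (k : ℤ) (z e : Pt) : Prop :=
  (C.vertex k = z ∧ C.vertex (k + 1) = z + e) ∨ (C.vertex k = z + e ∧ C.vertex (k + 1) = z)

/-- A covering: a set of complete curves such that every nonoriented unit segment
of the lattice is the support of exactly one segment of one curve. -/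
def IsCovering (𝒞 : Set Curve) : Prop :=
  (∀ C ∈ 𝒞, C.IsComplete) ∧
  ∀ z e : Pt, (e = (1, 0) ∨ e = (0, 1)) →
    ∃! p : Curve × ℤ, p.1 ∈ 𝒞 ∧ SegSupports p.1 p.2 z e

/-- Segments `k` of `C` and `l` of `D` have the same (nonoriented) support. -/
def SameSeg (C : Curve) (k : ℤ) (D : Curve) (l : ℤ) : Prop :=
  (C.vertex k = D.vertex l ∧ C.vertex (k + 1) = D.vertex (l + 1)) ∨
  (C.vertex k = D.vertex (l + 1) ∧ C.vertex (k + 1) = D.vertex l)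

/-- A self-avoiding curve: distinct segments have distinct supports.  (Since the
curves considered here turn by ±π/2 at every vertex and are rounded at vertices,
two passes of such a curve through a vertex never cross, so this is equivalent to
the geometric notion.) -/
def Curve.SelfAvoiding (C : Curve) : Prop :=
  ∀ k l : ℤ, C.HasSeg k → C.HasSeg l → SameSeg C k C l → k = l

/-- Disjointness of two (rounded) curves: no common segment support. -/
def DisjointCurves (C D : Curve) : Prop :=
  ∀ k l : ℤ, C.HasSeg k → D.HasSeg l → ¬ SameSeg C k D l

/-- The nonoriented segment `[a, b]` is a segment of the curve `C`. -/
def SegOfCurve (C : Curve) (a b : Pt) : Prop :=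
  ∃ k : ℤ, C.HasSeg k ∧
    ((C.vertex k = a ∧ C.vertex (k + 1) = b) ∨ (C.vertex k = b ∧ C.vertex (k + 1) = a))

/-- The nonoriented segment `[a, b]` is a segment of a curve of `𝒟`. -/
def SegInSet (𝒟 : Set Curve) (a b : Pt) : Prop := ∃ C ∈ 𝒟, SegOfCurve C a b

/-! ### Translations, subcurves, patterns and local isomorphism -/

/-- Translation of a curve by a lattice vector. -/
def Curve.translate (t : Pt) (C : Curve) : Curve where
  dom := C.dom
  isInterval := C.isInterval
  nontrivial := C.nontrivial
  vertex := fun k => C.vertex k + t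
  step := fun k h1 h2 => by simpa using C.step k h1 h2
  turn := fun k h1 h2 => by simpa using C.turn k h1 h2

/-- Translation of a set of curves. -/
def translateSet (t : Pt) (𝓕 : Set Curve) : Set Curve := Curve.translate t '' 𝓕

/-- `f` embeds in `C` with index shift `j` (as a subcurve, preserving orientation
and connections). -/
def Embeds (f C : Curve) (j : ℤ) : Prop :=
  ∀ k ∈ f.dom, (k + j ∈ C.dom ∧ f.vertex k = C.vertex (k + j))

/-- `f` is a subcurve of `C`. -/
def IsSubcurveOf (f C : Curve) : Prop := ∃ j : ℤ, Embeds f C j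

/-- A bounded set of curves. -/
def BoundedSet (𝓑 : Set Curve) : Prop :=
  ∃ N : ℕ, ∀ C ∈ 𝓑, ∀ k ∈ C.dom, |(C.vertex k).1| ≤ N ∧ |(C.vertex k).2| ≤ N

/-- A pattern of `𝒞`: a bounded set of subcurves of curves of `𝒞`. -/
def IsPatternOf (P : Set Curve) (𝒞 : Set Curve) : Prop :=
  BoundedSet P ∧ ∀ f ∈ P, ∃ C ∈ 𝒞, IsSubcurveOf f C

/-- All vertices of `C` lie in the square with corner `z` and side `r`. -/
def InSquare (C : Curve) (z : Pt) (r : ℕ) : Prop :=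
  ∀ k ∈ C.dom, z.1 ≤ (C.vertex k).1 ∧ (C.vertex k).1 ≤ z.1 + r ∧
    z.2 ≤ (C.vertex k).2 ∧ (C.vertex k).2 ≤ z.2 + r

/-- The local isomorphism property: every pattern of `𝒞` occurs (up to translation)
in every square of a sufficiently large size. -/
def HasLIP (𝒞 : Set Curve) : Prop :=
  ∀ P : Set Curve, IsPatternOf P 𝒞 → ∃ r : ℕ, 0 < r ∧ ∀ z : Pt, ∃ t : Pt,
    IsPatternOf (translateSet t P) 𝒞 ∧ ∀ f ∈ translateSet t P, InSquare f z r

/-- Two coverings are locally isomorphic if each bounded pattern of either one is,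
up to translation, a pattern of the other. -/
def LocallyIsomorphic (𝒞 𝒟 : Set Curve) : Prop :=
  (∀ P : Set Curve, IsPatternOf P 𝒞 → ∃ t : Pt, IsPatternOf (translateSet t P) 𝒟) ∧
  (∀ P : Set Curve, IsPatternOf P 𝒟 → ∃ t : Pt, IsPatternOf (translateSet t P) 𝒞)

/-! ### The relations `<` and `≪` between sets of curves -/

/-- Segment `k` of `C` belongs to the placed curve `f` (via some embedding of `f`
into `C`). -/
def SegBelongs (f C : Curve) (k : ℤ) : Prop :=
  ∃ j : ℤ, Embeds f C j ∧ f.HasSeg (k - j)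

/-- Segments `k` and `k+1` of `C` are consecutive segments of the placed curve `f`. -/
def SegPairBelongs (f C : Curve) (k : ℤ) : Prop :=
  ∃ j : ℤ, Embeds f C j ∧ f.HasSeg (k - j) ∧ f.HasSeg (k - j + 1)

/-- `𝓕 < 𝒟`: each curve of `𝓕` is contained in a curve of `𝒟`, and any consecutive
segments of a curve of `𝒟` which belong to curves of `𝓕` are consecutive in one of
them. -/
def CurvesLt (𝓕 𝒟 : Set Curve) : Prop :=
  𝓕 ≠ 𝒟 ∧
  (∀ f ∈ 𝓕, ∃ C ∈ 𝒟, IsSubcurveOf f C) ∧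
  (∀ C ∈ 𝒟, ∀ k : ℤ, (∃ f ∈ 𝓕, SegBelongs f C k) → (∃ g ∈ 𝓕, SegBelongs g C (k + 1)) →
    ∃ h ∈ 𝓕, SegPairBelongs h C k)

/-- The three segments completing `[a,b]` to the unit square on the side `p`
(`p` a unit vector perpendicular to `b - a`) all belong to curves of `𝒟`. -/
def FlankSegs (𝒟 : Set Curve) (a b p : Pt) : Prop :=
  SegInSet 𝒟 a (a + p) ∧ SegInSet 𝒟 (a + p) (b + p) ∧ SegInSet 𝒟 b (b + p)

/-- `𝓕 ≪ 𝒟`: `𝓕 < 𝒟` and, for each segment `A` of a curve of `𝓕`, the `6` segments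
which form two squares with `A` belong to curves of `𝒟`. -/
def CurvesLL (𝓕 𝒟 : Set Curve) : Prop :=
  CurvesLt 𝓕 𝒟 ∧
  ∀ f ∈ 𝓕, ∀ k : ℤ, f.HasSeg k →
    FlankSegs 𝒟 (f.vertex k) (f.vertex (k + 1)) (rot (f.vertex (k + 1) - f.vertex k)) ∧
    FlankSegs 𝒟 (f.vertex k) (f.vertex (k + 1)) (rotInv (f.vertex (k + 1) - f.vertex k))

/-! ### ∞-folding sequences and generated coverings -/

/-- `σ(S)`: reverse the finite sequence and change all signs. -/
def sigmaSeq (S : List ℤ) : List ℤ := (S.map fun a => -a).reverse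

/-- The `n`-folding sequences, obtained by folding a strip of paper `n` times. -/
inductive IsNFolding : ℕ → List ℤ → Prop
  | one (a : ℤ) : (a = 1 ∨ a = -1) → IsNFolding 1 [a]
  | succ {n : ℕ} {S : List ℤ} (a : ℤ) : (a = 1 ∨ a = -1) → IsNFolding n S →
      IsNFolding (n + 1) (S ++ a :: sigmaSeq S)

/-- The finite subword `(b k, b (k+1), …, b (k+l-1))` of a bi-infinite sequence. -/
def wordAt (b : ℤ → ℤ) (k : ℤ) (l : ℕ) : List ℤ := List.ofFn fun i : Fin l => b (k + (i : ℕ))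

/-- A complete folding sequence: a bi-infinite sequence all of whose finite
subwords occur in some `n`-folding sequence. -/
def IsCompleteFoldingSeq (b : ℤ → ℤ) : Prop :=
  ∀ k : ℤ, ∀ l : ℕ, ∃ n : ℕ, ∃ S : List ℤ, IsNFolding n S ∧ (wordAt b k l) <:+: S

/-- A complete folding curve: a complete curve associated to a complete folding
sequence. -/
def IsCompleteFoldingCurve (C : Curve) : Prop :=
  C.IsComplete ∧ ∃ b : ℤ → ℤ, C.AssocSeq b ∧ IsCompleteFoldingSeq b

/-- A covering of the plane by complete folding curves. -/
def IsFoldingCovering (𝒞 : Set Curve) : Prop :=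
  IsCovering 𝒞 ∧ ∀ C ∈ 𝒞, IsCompleteFoldingCurve C

/-- An ∞-folding sequence `(a_k)_{k ≥ 1}` (the value at `0` is irrelevant):
`(a_1, …, a_{2^n - 1})` is an `n`-folding sequence for each `n ≥ 1`. -/
def IsInfFolding (a : ℕ → ℤ) : Prop :=
  ∀ n : ℕ, 0 < n → IsNFolding n (List.ofFn fun i : Fin (2 ^ n - 1) => a ((i : ℕ) + 1))

/-- The bi-infinite sequence `(σ(a), ε, a)`: equals `a_k` for `k ≥ 1`, `ε` at `0`,
and `-a_{-k}` for `k ≤ -1`. -/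
def twoSided (a : ℕ → ℤ) (ε : ℤ) : ℤ → ℤ := fun k =>
  if 0 < k then a k.toNat else if k = 0 then ε else -(a (-k).toNat)

/-- A covering generated by a curve associated to the ∞-folding sequence `a`:
a covering which satisfies the local isomorphism property and contains a complete
curve associated to `(σ(a), ε, a)` for some `ε = ±1`. -/
def GeneratedBy (𝒞 : Set Curve) (a : ℕ → ℤ) : Prop :=
  IsCovering 𝒞 ∧ HasLIP 𝒞 ∧ ∃ ε : ℤ, (ε = 1 ∨ ε = -1) ∧ ∃ C ∈ 𝒞, C.AssocSeq (twoSided a ε)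

/-- The derived sequence of an ∞-folding sequence is `(a_{2k})_{k≥1}`; iterating
`k` times gives `(a_{2^k · j})_{j≥1}`. -/
def derivedIter (a : ℕ → ℤ) (k : ℕ) : ℕ → ℤ := fun j => a (2 ^ k * j)

/-- An alternating folding sequence. -/
def IsAlternating (a : ℕ → ℤ) : Prop :=
  IsInfFolding a ∧ ∀ n : ℕ, a (2 ^ (n + 1)) = -(a (2 ^ n))

/-! ### The sets `E_n(𝒞)` and the property `P` -/

/-- A walk of length `L` starting at `z` along a curve of `𝒞` (in either direction):
the nonoriented subcurves with endpoint `z` and length `L`. -/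
def WalkFrom (𝒞 : Set Curve) (z : Pt) (L : ℕ) (w : ℕ → Pt) : Prop :=
  w 0 = z ∧ ∃ C ∈ 𝒞,
    (∃ j : ℤ, ∀ i : ℕ, i ≤ L → (j + (i : ℕ) ∈ C.dom ∧ w i = C.vertex (j + (i : ℕ)))) ∨
    (∃ j : ℤ, ∀ i : ℕ, i ≤ L → (j - (i : ℕ) ∈ C.dom ∧ w i = C.vertex (j - (i : ℕ))))

/-- `E_n(𝒞)`: the set of points `z` such that the four nonoriented subcurves of
curves of `𝒞` with endpoint `z` and length `2^n` are obtained from one of them by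
the rotations of center `z` (equivalently: the set of walks from `z` of length
`2^n` is stable under the rotation of center `z` and angle π/2). -/
def Eset (𝒞 : Set Curve) (n : ℕ) : Set Pt :=
  {z | ∀ w : ℕ → Pt, WalkFrom 𝒞 z (2 ^ n) w →
    WalkFrom 𝒞 z (2 ^ n) (fun i => z + rot (w i - z))}

/-- A diagonal direction. -/
def IsDiag (d : Pt) : Prop := d = (1, 1) ∨ d = (1, -1) ∨ d = (-1, 1) ∨ d = (-1, -1)

/-- A curve of `𝒞` passes through `X` connecting the segments `[X, X+e]` and
`[X, X+f]` (rounding the corner at `X`). -/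
def PassAt (𝒞 : Set Curve) (X e f : Pt) : Prop :=
  ∃ C ∈ 𝒞, ∃ k : ℤ, C.HasSeg k ∧ C.HasSeg (k + 1) ∧ C.vertex (k + 1) = X ∧
    ((C.vertex k = X + e ∧ C.vertex (k + 2) = X + f) ∨
     (C.vertex k = X + f ∧ C.vertex (k + 2) = X + e))

/-- The two unit squares lying in the quadrants `d` and `-d` at their common vertex
`X` are connected at `X`: no curve of `𝒞` rounds the corner at `X` inside either of
these two quadrants, so that the two centers and `X` lie in the same connected
component of the complement of `𝒞`. -/
def SquaresConnected (𝒞 : Set Curve) (X d : Pt) : Prop :=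
  ¬ PassAt 𝒞 X ((d.1 : ℤ), (0 : ℤ)) ((0 : ℤ), (d.2 : ℤ)) ∧
  ¬ PassAt 𝒞 X ((-d.1 : ℤ), (0 : ℤ)) ((0 : ℤ), (-d.2 : ℤ))

/-- Exactly two of three propositions hold. -/
def ExactlyTwo (A B C : Prop) : Prop := (A ∧ B ∧ ¬C) ∨ (A ∧ ¬B ∧ C) ∨ (¬A ∧ B ∧ C)

/-- The property `P(X)`: `X ∈ E_2(𝒞)` and each unit square with vertex `X` is
connected to `2` unit squares without vertex `X` (the candidates being the three
unit squares meeting it at its three corners other than `X`). -/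
def Pprop (𝒞 : Set Curve) (X : Pt) : Prop :=
  X ∈ Eset 𝒞 2 ∧ ∀ d : Pt, IsDiag d →
    ExactlyTwo (SquaresConnected 𝒞 (X + d) d)
      (SquaresConnected 𝒞 (X + ((d.1 : ℤ), (0 : ℤ))) ((d.1 : ℤ), (-d.2 : ℤ)))
      (SquaresConnected 𝒞 (X + ((0 : ℤ), (d.2 : ℤ))) ((d.1 : ℤ), (-d.2 : ℤ)))

/-! ### Density -/

/-- All vertices of `C` lie in the real square `Σ_s(z)`. -/
def InRealSquare (C : Curve) (z : ℝ × ℝ) (s : ℝ) : Prop :=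
  ∀ k ∈ C.dom, z.1 ≤ ((C.vertex k).1 : ℝ) ∧ ((C.vertex k).1 : ℝ) ≤ z.1 + s ∧
    z.2 ≤ ((C.vertex k).2 : ℝ) ∧ ((C.vertex k).2 : ℝ) ≤ z.2 + s

/-- The translates `ℱ` of `ℬ` with `ℱ < 𝒞` and `ℱ ⊆ Σ_s(z)`, indexed by the
translation vector. -/
def occSet (𝒞 ℬ : Set Curve) (z : ℝ × ℝ) (s : ℝ) : Set Pt :=
  {t : Pt | CurvesLt (translateSet t ℬ) 𝒞 ∧ ∀ f ∈ translateSet t ℬ, InRealSquare f z s}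

/-- `ℬ` has density `d` in `𝒞`. -/
def HasDensity (𝒞 ℬ : Set Curve) (d : ℝ) : Prop :=
  ∀ ε : ℝ, 0 < ε → ∃ r : ℝ, 0 < r ∧ ∀ s : ℝ, r ≤ s → ∀ z : ℝ × ℝ,
    s ^ 2 * d * (1 - ε) < ((occSet 𝒞 ℬ z s).ncard : ℝ) ∧
    ((occSet 𝒞 ℬ z s).ncard : ℝ) < s ^ 2 * d * (1 + ε)

/-- No vertex of a curve of `𝒜` lies in `E`. -/
def NoVertexIn (𝒜 : Set Curve) (E : Set Pt) : Prop :=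
  ∀ C ∈ 𝒜, ∀ k ∈ C.dom, C.vertex k ∉ E

/-! ### Derivations -/

/-- Every `z ∈ ℤ+iℤ` is the initial point of two opposite segments. -/
def OppositeSegsEverywhere (𝒞 : Set Curve) : Prop :=
  ∀ z : Pt, ∃ C ∈ 𝒞, ∃ k : ℤ, ∃ D ∈ 𝒞, ∃ l : ℤ, C.HasSeg k ∧ D.HasSeg l ∧
    C.vertex k = z ∧ D.vertex l = z ∧ C.vertex (k + 1) - z = -(D.vertex (l + 1) - z)

/-- The set of `m` consecutive placed segments of `C` starting at index `j`. -/
def run (C : Curve) (j : ℤ) (m : ℕ) : Set (Curve × ℤ) :=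
  {p | p.1 = C ∧ ∃ i : ℕ, i < m ∧ p.2 = j + (i : ℕ)}

/-- `Δ` is a derivation from `𝒞` to `𝒟` with associated finite sequence `L`
(of length `m - 1`): the preimage of each segment `A` of a curve of `𝒟` is a
subcurve of a curve of `𝒞` with `m` segments, associated to `L` or `-L` according
to the parity of `α(A)`; preimages of consecutive segments are consecutive; and a
fixed direct similitude `w ↦ u·w + v` maps `α(A)`, `β(A)` to the initial and
terminal points of the preimage of `A`. -/
def IsDerivationWith (𝒞 𝒟 : Set Curve) (Δ : Curve × ℤ → Curve × ℤ) (L : List ℤ) : Prop :=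
  ∃ u v : Pt, u ≠ (0, 0) ∧
  (∀ p : Curve × ℤ, p.1 ∈ 𝒞 → (Δ p).1 ∈ 𝒟) ∧
  ∀ D ∈ 𝒟, ∀ l : ℤ, ∃ C ∈ 𝒞, ∃ j : ℤ,
    {p : Curve × ℤ | p.1 ∈ 𝒞 ∧ Δ p = (D, l)} = run C j (L.length + 1) ∧
    {p : Curve × ℤ | p.1 ∈ 𝒞 ∧ Δ p = (D, l + 1)} = run C (j + (L.length + 1)) (L.length + 1) ∧
    (∀ i : ℕ, i < L.length →
      C.vertex (j + (i : ℕ) + 2) - C.vertex (j + (i : ℕ) + 1) =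
        rotBy (if Even ((D.vertex l).1 + (D.vertex l).2) then L.getD i 0 else -(L.getD i 0))
          (C.vertex (j + (i : ℕ) + 1) - C.vertex (j + (i : ℕ)))) ∧
    C.vertex j = cmul u (D.vertex l) + v ∧
    C.vertex (j + ((L.length : ℤ) + 1)) = cmul u (D.vertex (l + 1)) + v

/-- `Δ` is a derivation from `𝒞` to `𝒟`. -/
def IsDerivation (𝒞 𝒟 : Set Curve) (Δ : Curve × ℤ → Curve × ℤ) : Prop :=
  ∃ L : List ℤ, L ≠ [] ∧ (∀ a ∈ L, a = 1 ∨ a = -1) ∧ IsDerivationWith 𝒞 𝒟 Δ L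

/-! ### Folding strings (Dekking) -/

/-- A folding string: a finite ±1-sequence. -/
def IsFoldingString (S : List ℤ) : Prop := ∀ a ∈ S, a = 1 ∨ a = -1

/-- Entry `i` (1-based) of the folding convolution `S ∗ T`, where `m = |S| + 1`:
`(S∗T)_{km} = t_k`, and `(S∗T)_{km+j} = s_j` if `k` is even, `-s_{m-j}` if `k`
is odd. -/
def convEntry (S T : List ℤ) (i : ℕ) : ℤ :=
  let m := S.length + 1
  if i % m = 0 then T.getD (i / m - 1) 0
  else if (i / m) % 2 = 0 then S.getD (i % m - 1) 0
  else -(S.getD (m - i % m - 1) 0)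

/-- The folding convolution `S ∗ T` of two folding strings. -/
def foldConv (S T : List ℤ) : List ℤ :=
  List.ofFn fun idx : Fin ((S.length + 1) * (T.length + 1) - 1) => convEntry S T ((idx : ℕ) + 1)

/-- `foldIter S n = S^{∗(n+1)}`. -/
def foldIter (S : List ℤ) : ℕ → List ℤ
  | 0 => S
  | n + 1 => foldConv (foldIter S n) S

/-- `S^{∗∞}` as a function on 1-based indices (each `S^{∗n}` is an initial segment
of `S^{∗(n+1)}`, so the value of entry `i` has stabilized in `S^{∗(i+1)}`). -/
def foldInf (S : List ℤ) (i : ℕ) : ℤ := (foldIter S i).getD (i - 1) 0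

/-- A complete `S`-folding sequence: a bi-infinite sequence each of whose finite
subwords occurs in `S^{∗∞}`. -/
def IsCompleteSFoldingSeq (S : List ℤ) (b : ℤ → ℤ) : Prop :=
  ∀ k : ℤ, ∀ l : ℕ, ∃ j : ℕ, 0 < j ∧ ∀ i : ℕ, i < l → b (k + (i : ℕ)) = foldInf S (j + i)

/-- A complete `S`-folding curve. -/
def IsCompleteSFoldingCurve (S : List ℤ) (C : Curve) : Prop :=
  C.IsComplete ∧ ∃ b : ℤ → ℤ, C.AssocSeq b ∧ IsCompleteSFoldingSeq S b

/-- A (one-sided infinite) curve associated to `S^{∗∞}`, with segments indexed by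
`k ≥ 1`. -/
def IsInfSCurve (S : List ℤ) (C : Curve) : Prop :=
  C.dom = Set.Ici (1 : ℤ) ∧ C.AssocSeq (fun k => foldInf S k.toNat)

/-- `C` covers the lattice square with corner `z` and side `m`: each unit segment
inside that square is the support of a segment of `C`. -/
def CoversSquare (C : Curve) (z : Pt) (m : ℕ) : Prop :=
  ∀ a e : Pt, (e = (1, 0) ∨ e = (0, 1)) →
    z.1 ≤ a.1 → a.1 + e.1 ≤ z.1 + m → z.2 ≤ a.2 → a.2 + e.2 ≤ z.2 + m →
    SegOfCurve C a (a + e)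

/-- `C` covers arbitrarily large squares. -/
def CoversArbLargeSquares (C : Curve) : Prop :=
  ∀ m : ℕ, 0 < m → ∃ z : Pt, CoversSquare C z m

/-- `D` is the image of `C` under `n` quarter turns (rotation of angle `nπ/2`)
about the origin. -/
def RotCopy (n : ℕ) (C D : Curve) : Prop :=
  D.dom = C.dom ∧ ∀ k : ℤ, D.vertex k = rot^[n] (C.vertex k)

/-- The curves of `𝒞` (together) cover the plane: every nonoriented unit segment is
the support of a segment of a curve of `𝒞`. -/
def CoversPlane (𝒞 : Set Curve) : Prop :=
  ∀ z e : Pt, (e = (1, 0) ∨ e = (0, 1)) → SegInSet 𝒞 z (z + e)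

/-- Property 1): every curve associated to `S^{∗∞}` is self-avoiding. -/
def Prop1 (S : List ℤ) : Prop := ∀ C : Curve, IsInfSCurve S C → C.SelfAvoiding

/-- Property 2): every curve associated to `S^{∗∞}` covers arbitrarily large
squares. -/
def Prop2 (S : List ℤ) : Prop := ∀ C : Curve, IsInfSCurve S C → CoversArbLargeSquares C

/-- Property 3) (`S` is perfect): for every curve `C` associated to `S^{∗∞}`
starting at the origin, the four curves obtained from `C` by the rotations of
angles `0, π/2, π, 3π/2` about the origin cover the plane. -/
def Prop3 (S : List ℤ) : Prop :=
  ∀ C D1 D2 D3 : Curve, IsInfSCurve S C → C.vertex 1 = (0, 0) →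
    RotCopy 1 C D1 → RotCopy 2 C D2 → RotCopy 3 C D3 →
    CoversPlane {C, D1, D2, D3}

/-- The complete curve `D` is obtained by connecting the one-sided curves `R`
(traversed forwards, on indices `≥ 1`) and `R'` (traversed backwards) at their
common initial point. -/
def ConnectsPair (D R R' : Curve) : Prop :=
  D.IsComplete ∧ (∀ k : ℤ, 1 ≤ k → D.vertex k = R.vertex k) ∧
  (∀ k : ℤ, 1 ≤ k → D.vertex (2 - k) = R'.vertex k)

/-- The pair of complete curves `(A1, A2)` is obtained by connecting the four
rotated copies `C, D1, D2, D3` of a curve. -/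
def ConnectionOf (C D1 D2 D3 A1 A2 : Curve) : Prop :=
  ∃ i j k l : Fin 4, ({i, j, k, l} : Set (Fin 4)) = Set.univ ∧
    ConnectsPair A1 (![C, D1, D2, D3] i) (![C, D1, D2, D3] j) ∧
    ConnectsPair A2 (![C, D1, D2, D3] k) (![C, D1, D2, D3] l)

/-! ### Equivalence of curves and of sets of curves (up to reindexing/reversal) -/

/-- `C` and `D` are the same curve up to an index shift. -/
def ShiftEq (C D : Curve) : Prop :=
  ∃ j : ℤ, (∀ k : ℤ, k ∈ C.dom ↔ k + j ∈ D.dom) ∧ ∀ k ∈ C.dom, C.vertex k = D.vertex (k + j)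

/-- `C` is the reversal of `D`, up to an index shift. -/
def ReverseShiftEq (C D : Curve) : Prop :=
  ∃ j : ℤ, (∀ k : ℤ, k ∈ C.dom ↔ j - k ∈ D.dom) ∧ ∀ k ∈ C.dom, C.vertex k = D.vertex (j - k)

/-- Two curves are equivalent if they have the same geometric support with the
same connections. -/
def CurveEquiv (C D : Curve) : Prop := ShiftEq C D ∨ ReverseShiftEq C D

/-- Two sets of curves are equivalent if they consist of (pairwise) equivalent
curves. -/
def SetEquivCurves (𝒞 𝒟 : Set Curve) : Prop :=
  (∀ C ∈ 𝒞, ∃ D ∈ 𝒟, CurveEquiv C D) ∧ (∀ D ∈ 𝒟, ∃ C ∈ 𝒞, CurveEquiv C D)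

/-- Two curves have a common vertex. -/
def HaveCommonVertex (C D : Curve) : Prop :=
  ∃ k ∈ C.dom, ∃ l ∈ D.dom, C.vertex k = D.vertex l

/-! ### Inverse images of sets of curves under a derivation -/

/-- The placed segments of `f`, embedded in `C` with shift `j`. -/
def SegsOfAt (f C : Curve) (j : ℤ) : Set (Curve × ℤ) :=
  {p | p.1 = C ∧ ∃ k : ℤ, f.HasSeg k ∧ p.2 = k + j}

/-- `g = Δ⁻¹(f)`: the segments of `g` (placed in `𝒞`) are exactly the `Δ`-preimages
of the segments of `f` (placed in `𝒞`). -/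
def IsInvImageCurve (𝒞 : Set Curve) (Δ : Curve × ℤ → Curve × ℤ) (f g : Curve) : Prop :=
  ∃ C ∈ 𝒞, ∃ jf : ℤ, Embeds f C jf ∧ ∃ D ∈ 𝒞, ∃ jg : ℤ, Embeds g D jg ∧
    SegsOfAt g D jg = {p : Curve × ℤ | p.1 ∈ 𝒞 ∧ Δ p ∈ SegsOfAt f C jf}

/-- `𝓖 = Δ⁻¹(𝓕)` for sets of curves sitting inside `𝒞`. -/
def IsInvImageSet (𝒞 : Set Curve) (Δ : Curve × ℤ → Curve × ℤ) (𝓕 𝓖 : Set Curve) : Prop :=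
  (∀ f ∈ 𝓕, ∃ g ∈ 𝓖, IsInvImageCurve 𝒞 Δ f g) ∧
  (∀ g ∈ 𝓖, ∃ f ∈ 𝓕, IsInvImageCurve 𝒞 Δ f g)

/-! ### Local isomorphism for bi-infinite sequences -/

/-- A bi-infinite sequence satisfies the local isomorphism property if each of its
finite subwords occurs in all of its sufficiently long subwords. -/
def SeqLIP (b : ℤ → ℤ) : Prop :=
  ∀ k : ℤ, ∀ l : ℕ, ∃ r : ℕ, ∀ k' : ℤ, ∃ j : ℤ, k' ≤ j ∧ j + l ≤ k' + r ∧
    ∀ i : ℕ, i < l → b (j + (i : ℕ)) = b (k + (i : ℕ))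

/-- Two bi-infinite sequences are locally isomorphic if every finite subword of
each one occurs in the other. -/
def SeqLocallyIsomorphic (b c : ℤ → ℤ) : Prop :=
  (∀ k : ℤ, ∀ l : ℕ, ∃ j : ℤ, ∀ i : ℕ, i < l → c (j + (i : ℕ)) = b (k + (i : ℕ))) ∧
  (∀ k : ℤ, ∀ l : ℕ, ∃ j : ℤ, ∀ i : ℕ, i < l → b (j + (i : ℕ)) = c (k + (i : ℕ)))


/-! ### Auxiliary algebra on `Pt` -/

lemma cmul_one' (w : Pt) : cmul (1,0) w = w := by
  simp [cmul]

lemma cmul_comm' (u v : Pt) : cmul u v = cmul v u := by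
  simp only [cmul, Prod.mk.injEq]; constructor <;> ring

lemma cmul_assoc' (u v w : Pt) : cmul (cmul u v) w = cmul u (cmul v w) := by
  simp only [cmul, Prod.mk.injEq]; constructor <;> ring

lemma cmul_add' (u x y : Pt) : cmul u (x + y) = cmul u x + cmul u y := by
  simp only [cmul, Prod.ext_iff, Prod.fst_add, Prod.snd_add]; constructor <;> ring

lemma cmul_sub' (u x y : Pt) : cmul u (x - y) = cmul u x - cmul u y := by
  simp only [cmul, Prod.ext_iff, Prod.fst_sub, Prod.snd_sub]; constructor <;> ring

lemma cmul_neg' (u x : Pt) : cmul u (-x) = -(cmul u x) := by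
  simp only [cmul, Prod.ext_iff, Prod.fst_neg, Prod.snd_neg]; constructor <;> ring

lemma rot_eq_cmul (w : Pt) : rot w = cmul (0,1) w := by
  simp [rot, cmul]

lemma rotInv_eq_cmul (w : Pt) : rotInv w = cmul (0,-1) w := by
  simp [rotInv, cmul]

lemma rotBy_cmul (a : ℤ) (u w : Pt) : rotBy a (cmul u w) = cmul u (rotBy a w) := by
  unfold rotBy
  split <;> simp only [rot_eq_cmul, rotInv_eq_cmul, ← cmul_assoc']
    <;> rw [cmul_comm' _ u]

lemma rotBy_neg_vec (a : ℤ) (w : Pt) : rotBy a (-w) = -(rotBy a w) := by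
  unfold rotBy; split <;> simp [rot, rotInv, Prod.ext_iff]

lemma rotBy_cancel {a : ℤ} (ha : a = 1 ∨ a = -1) (w : Pt) :
    rotBy (-a) (rotBy a w) = w := by
  rcases ha with h | h <;> subst h <;> simp [rotBy, rot, rotInv]

/-- conjugate -/
def conjP (w : Pt) : Pt := (w.1, -w.2)

lemma unit_cases {u : Pt} (h : IsUnitVec u) :
    u = (1,0) ∨ u = (-1,0) ∨ u = (0,1) ∨ u = (0,-1) := h

lemma unit_conj_cmul {u : Pt} (h : IsUnitVec u) : cmul (conjP u) u = (1,0) := by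
  rcases h with h | h | h | h <;> subst h <;> simp [conjP, cmul]

lemma unit_cmul {u v : Pt} (hu : IsUnitVec u) (hv : IsUnitVec v) :
    IsUnitVec (cmul u v) := by
  rcases hu with h | h | h | h <;> subst h <;>
    rcases hv with h | h | h | h <;> subst h <;> simp [cmul, IsUnitVec]

lemma unit_conj {u : Pt} (hu : IsUnitVec u) : IsUnitVec (conjP u) := by
  rcases hu with h | h | h | h <;> subst h <;> simp [conjP, IsUnitVec]

lemma unit_neg {u : Pt} (hu : IsUnitVec u) : IsUnitVec (-u) := by
  rcases hu with h | h | h | h <;> subst h <;> simp [IsUnitVec, Prod.ext_iff]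

lemma rot_unit {u : Pt} (hu : IsUnitVec u) : IsUnitVec (rot u) := by
  rcases hu with h | h | h | h <;> subst h <;> simp [rot, IsUnitVec]

lemma rotInv_unit {u : Pt} (hu : IsUnitVec u) : IsUnitVec (rotInv u) := by
  rcases hu with h | h | h | h <;> subst h <;> simp [rotInv, IsUnitVec]

lemma rotBy_unit (a : ℤ) {u : Pt} (hu : IsUnitVec u) : IsUnitVec (rotBy a u) := by
  unfold rotBy; split
  · exact rot_unit hu
  · exact rotInv_unit hu

lemma rotBy_or (a : ℤ) (w : Pt) : rotBy a w = rot w ∨ rotBy a w = rotInv w := by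
  unfold rotBy; split
  · exact Or.inl rfl
  · exact Or.inr rfl

lemma cmul_inj {u : Pt} (hu : IsUnitVec u) {x y : Pt} (h : cmul u x = cmul u y) :
    x = y := by
  have := congrArg (cmul (conjP u)) h
  rwa [← cmul_assoc', ← cmul_assoc', unit_conj_cmul hu, cmul_one', cmul_one'] at this

lemma exists_unit_factor {x y : Pt} (hx : IsUnitVec x) (hy : IsUnitVec y) :
    ∃ u : Pt, IsUnitVec u ∧ y = cmul u x := by
  refine ⟨cmul y (conjP x), unit_cmul hy (unit_conj hx), ?_⟩
  rw [cmul_assoc', cmul_comm' (conjP x) x]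
  rw [cmul_comm' x (conjP x), unit_conj_cmul hx, cmul_comm', cmul_one']
/-! ### `foldInf` machinery -/

lemma convEntry_def (X T : List ℤ) (i : ℕ) : convEntry X T i =
    (if i % (X.length + 1) = 0 then T.getD (i / (X.length + 1) - 1) 0
     else if (i / (X.length + 1)) % 2 = 0 then X.getD (i % (X.length + 1) - 1) 0
     else -(X.getD ((X.length + 1) - i % (X.length + 1) - 1) 0)) := rfl

lemma foldConv_length (X T : List ℤ) :
    (foldConv X T).length = (X.length + 1) * (T.length + 1) - 1 := by
  simp [foldConv]

lemma foldIter_length (S : List ℤ) (n : ℕ) :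
    (foldIter S n).length = (S.length + 1) ^ (n + 1) - 1 := by
  induction n with
  | zero => simp [foldIter]
  | succ n ih =>
      have h1 : 1 ≤ (S.length + 1) ^ (n + 1) := Nat.one_le_pow _ _ (by omega)
      rw [foldIter, foldConv_length, ih]
      rw [Nat.sub_add_cancel h1, pow_succ]
      ring_nf

lemma foldConv_getD (X T : List ℤ) (i : ℕ) (h1 : 1 ≤ i)
    (h2 : i ≤ (X.length + 1) * (T.length + 1) - 1) :
    (foldConv X T).getD (i - 1) 0 = convEntry X T i := by
  have hlen : i - 1 < (foldConv X T).length := by rw [foldConv_length]; omega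
  rw [List.getD_eq_getElem _ _ hlen]
  simp only [foldConv, List.getElem_ofFn]
  congr 1
  omega

lemma foldConv_getD_prefix (X T : List ℤ) (hT : T ≠ []) (idx : ℕ) (hidx : idx < X.length) :
    (foldConv X T).getD idx 0 = X.getD idx 0 := by
  have hT1 : 1 ≤ T.length := List.length_pos_iff.mpr hT
  have hmul : (X.length + 1) * 2 ≤ (X.length + 1) * (T.length + 1) :=
    Nat.mul_le_mul_left _ (by omega)
  have h2 : idx + 1 ≤ (X.length + 1) * (T.length + 1) - 1 := by omega
  have := foldConv_getD X T (idx + 1) (by omega) h2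
  simp only [Nat.add_sub_cancel] at this
  rw [this, convEntry_def]
  have hm : (idx + 1) % (X.length + 1) = idx + 1 := Nat.mod_eq_of_lt (by omega)
  have hd : (idx + 1) / (X.length + 1) = 0 := Nat.div_eq_of_lt (by omega)
  simp [hm, hd]

lemma foldIter_getD_stable (S : List ℤ) (hne : S ≠ []) (n : ℕ) (idx : ℕ)
    (hidx : idx < (foldIter S n).length) :
    (foldIter S (n + 1)).getD idx 0 = (foldIter S n).getD idx 0 := by
  rw [foldIter]; exact foldConv_getD_prefix _ _ hne idx hidx

lemma two_le_m (S : List ℤ) (hne : S ≠ []) : 2 ≤ S.length + 1 := by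
  have := List.length_pos_iff.mpr hne; omega

lemma foldIter_len_mono (S : List ℤ) {n n' : ℕ} (h : n ≤ n') :
    (foldIter S n).length ≤ (foldIter S n').length := by
  rw [foldIter_length, foldIter_length]
  have : (S.length + 1) ^ (n + 1) ≤ (S.length + 1) ^ (n' + 1) :=
    Nat.pow_le_pow_right (by omega) (by omega)
  omega

lemma foldIter_getD_stable' (S : List ℤ) (hne : S ≠ []) {n n' : ℕ} (h : n ≤ n') (idx : ℕ)
    (hidx : idx < (foldIter S n).length) :
    (foldIter S n').getD idx 0 = (foldIter S n).getD idx 0 := by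
  induction n', h using Nat.le_induction with
  | base => rfl
  | succ n' hn ih =>
      have hlen : idx < (foldIter S n').length :=
        lt_of_lt_of_le hidx (foldIter_len_mono S hn)
      rw [foldIter_getD_stable S hne n' idx hlen, ih]

lemma two_le_pow (S : List ℤ) (hne : S ≠ []) (n : ℕ) : 2 ≤ (S.length + 1) ^ (n + 1) :=
  le_trans (by calc (2:ℕ) = 2 ^ 1 := by norm_num
                _ ≤ 2 ^ (n + 1) := Nat.pow_le_pow_right (by omega) (by omega))
    (Nat.pow_le_pow_left (two_le_m S hne) _)

lemma lt_pow_self' (S : List ℤ) (hne : S ≠ []) (i : ℕ) : i < (S.length + 1) ^ (i + 1) := by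
  calc i < 2 ^ i := Nat.lt_two_pow_self
  _ ≤ 2 ^ (i + 1) := Nat.pow_le_pow_right (by omega) (by omega)
  _ ≤ (S.length + 1) ^ (i + 1) := Nat.pow_le_pow_left (two_le_m S hne) _

lemma foldInf_getD (S : List ℤ) (hne : S ≠ []) (n : ℕ) (i : ℕ)
    (hi : i - 1 < (foldIter S n).length) :
    foldInf S i = (foldIter S n).getD (i - 1) 0 := by
  unfold foldInf
  rcases le_total i n with h | h
  · exact (foldIter_getD_stable' S hne h (i - 1) (by
      rw [foldIter_length]
      have := lt_pow_self' S hne i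
      have := two_le_pow S hne i
      omega)).symm
  · rw [foldIter_getD_stable' S hne h (i - 1) hi]

lemma convEntry_pm {X T : List ℤ} (hX : IsFoldingString X) (hT : IsFoldingString T)
    (hXne : X ≠ []) (hTne : T ≠ []) (i : ℕ) (him : 1 ≤ i)
    (hrange : i ≤ (X.length + 1) * (T.length + 1) - 1) :
    convEntry X T i = 1 ∨ convEntry X T i = -1 := by
  have hX1 : 1 ≤ X.length := List.length_pos_iff.mpr hXne
  have hT1 : 1 ≤ T.length := List.length_pos_iff.mpr hTne
  set m := X.length + 1 with hm
  rw [convEntry_def, ← hm]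
  split
  · rename_i h0
    have hge : m ≤ i := by
      rcases Nat.lt_or_ge i m with h | h
      · rw [Nat.mod_eq_of_lt h] at h0; omega
      · exact h
    have hdiv1 : 1 ≤ i / m := (Nat.one_le_div_iff (by omega)).mpr hge
    have hdivle : i / m ≤ T.length := by
      have h1 : i / m ≤ (m * (T.length + 1) - 1) / m := Nat.div_le_div_right hrange
      have heq : (m * (T.length + 1) - 1) / m = T.length := by
        have he : m * (T.length + 1) - 1 = (m - 1) + m * T.length := by
          rw [Nat.mul_add, Nat.mul_one]; omega
        rw [he, Nat.add_mul_div_left _ _ (by omega : 0 < m), Nat.div_eq_of_lt (by omega)]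
        omega
      omega
    have hlt : i / m - 1 < T.length := by omega
    rw [List.getD_eq_getElem _ _ hlt]
    exact hT _ (List.getElem_mem hlt)
  · rename_i h0
    have h1 : 1 ≤ i % m := by omega
    have h2 : i % m ≤ m - 1 := by
      have := Nat.mod_lt i (show 0 < m by omega); omega
    split
    · have hlt : i % m - 1 < X.length := by omega
      rw [List.getD_eq_getElem _ _ hlt]
      exact hX _ (List.getElem_mem hlt)
    · have hlt : m - i % m - 1 < X.length := by omega
      rw [List.getD_eq_getElem _ _ hlt]
      have := hX _ (List.getElem_mem hlt)
      omega

lemma foldIter_ne (S : List ℤ) (hne : S ≠ []) (n : ℕ) : foldIter S n ≠ [] := by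
  apply List.length_pos_iff.mp
  rw [foldIter_length]
  have h2 := two_le_pow S hne n
  omega

lemma foldingString_foldIter (S : List ℤ) (hS : IsFoldingString S) (hne : S ≠ []) (n : ℕ) :
    IsFoldingString (foldIter S n) := by
  induction n with
  | zero => exact hS
  | succ n ih =>
      intro a ha
      rw [foldIter, foldConv, List.mem_ofFn] at ha
      obtain ⟨idx, hidx⟩ := ha
      rw [← hidx]
      exact convEntry_pm ih hS (foldIter_ne S hne n) hne _ (by omega)
        (Nat.succ_le_of_lt idx.isLt)

lemma foldInf_pm (S : List ℤ) (hS : IsFoldingString S) (hne : S ≠ []) (i : ℕ) :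
    foldInf S i = 1 ∨ foldInf S i = -1 := by
  have hlen : i - 1 < (foldIter S i).length := by
    rw [foldIter_length]
    have := lt_pow_self' S hne i
    have := two_le_pow S hne i
    omega
  unfold foldInf
  rw [List.getD_eq_getElem _ _ hlen]
  exact foldingString_foldIter S hS hne i _ (List.getElem_mem hlen)
/-! ### The block structure of `S^{∗∞}` -/

lemma pred_mul_add (a M : ℕ) (ha : 1 ≤ a) : (a - 1) * M + M = a * M := by
  rw [Nat.sub_mul, Nat.one_mul]
  have : M ≤ a * M := Nat.le_mul_of_pos_left M (by omega)
  omega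

lemma block_aux (S : List ℤ) (hne : S ≠ []) (n : ℕ) :
    ∀ p k : ℕ, k < (S.length + 1) ^ p →
      (∀ j, 1 ≤ j → j ≤ (S.length + 1) ^ (n + 1) - 1 →
         foldInf S (k * (S.length + 1) ^ (n + 1) + j) = foldInf S j) ∨
      (∀ j, 1 ≤ j → j ≤ (S.length + 1) ^ (n + 1) - 1 →
         foldInf S (k * (S.length + 1) ^ (n + 1) + j) =
           -foldInf S ((S.length + 1) ^ (n + 1) - j)) := by
  set m := S.length + 1 with hm
  set M := m ^ (n + 1) with hMdef
  have hM2 : 2 ≤ M := two_le_pow S hne n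
  intro p
  induction p with
  | zero =>
      intro k hk
      have hk0 : k = 0 := by simpa using hk
      subst hk0
      left; intro j h1 h2; simp
  | succ p ih =>
      intro k hk
      have ha1 : 1 ≤ m ^ p := Nat.one_le_pow _ _ (by omega)
      set a := m ^ p with hadef
      obtain ⟨q, r, hq, hr, hkeq⟩ : ∃ q r : ℕ, q < m ∧ r < a ∧ k = a * q + r := by
        refine ⟨k / a, k % a, ?_, Nat.mod_lt _ (by omega), by
          have := Nat.div_add_mod k a; omega⟩
        apply Nat.div_lt_of_lt_mul
        calc k < m ^ (p + 1) := hk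
        _ = a * m := by rw [hadef, pow_succ]
      set P := a * M with hPdef
      have hPpow : P = m ^ (n + p + 1) := by
        rw [hPdef, hadef, hMdef, ← pow_add]
        congr 1
        omega
      have hP2 : 2 ≤ P := by rw [hPpow]; exact two_le_pow S hne (n + p)
      have haM : (a - 1) * M + M = P := pred_mul_add a M ha1
      have hPm : P * (m - 1) + P = P * m := by
        rw [Nat.mul_sub, Nat.mul_one]
        have : P ≤ P * m := Nat.le_mul_of_pos_right P (by omega)
        omega
      set Y := foldIter S (n + p) with hYdef
      have hYlen : Y.length + 1 = P := by
        rw [hYdef, foldIter_length, hPpow, ← hm]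
        omega
      have hrM : r * M ≤ (a - 1) * M := Nat.mul_le_mul_right _ (by omega)
      have hqP : P * q ≤ P * (m - 1) := Nat.mul_le_mul_left _ (by omega)
      have hcompute : ∀ j, 1 ≤ j → j ≤ M - 1 →
          foldInf S (k * M + j) = convEntry Y S (k * M + j) := by
        intro j h1 h2
        have hs : k * M + j = (r * M + j) + P * q := by rw [hkeq]; ring
        have h0 : foldInf S (k * M + j) =
            (foldIter S (n + p + 1)).getD (k * M + j - 1) 0 := by
          apply foldInf_getD S hne
          rw [foldIter_length, ← hm]
          have hP : m ^ (n + p + 1 + 1) = P * m := by rw [hPpow, pow_succ]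
          omega
        rw [h0]
        have hconv : foldIter S (n + p + 1) = foldConv Y S := by rw [hYdef]; rfl
        rw [hconv, foldConv_getD Y S _ (by omega) (by rw [hYlen, ← hm]; omega)]
      have hmod : ∀ j, 1 ≤ j → j ≤ M - 1 → (k * M + j) % P = r * M + j ∧
          (k * M + j) / P = q := by
        intro j h1 h2
        have hs : k * M + j = (r * M + j) + P * q := by rw [hkeq]; ring
        have hsP : r * M + j < P := by omega
        constructor
        · rw [hs, Nat.add_mul_mod_self_left, Nat.mod_eq_of_lt hsP]
        · rw [hs, Nat.add_mul_div_left _ _ (show 0 < P by omega),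
            Nat.div_eq_of_lt hsP]
          omega
      have hgetD : ∀ s : ℕ, 1 ≤ s → s ≤ P - 1 → Y.getD (s - 1) 0 = foldInf S s := by
        intro s hs1 hs2
        rw [hYdef]
        refine (foldInf_getD S hne (n + p) _ ?_).symm
        rw [foldIter_length, ← hm, ← hPpow]
        omega
      rcases Nat.even_or_odd q with hqpar | hqpar
      · -- q even : block r of Y
        rcases ih r hr with hblk | hblk
        · left
          intro j h1 h2
          rw [hcompute j h1 h2, convEntry_def, hYlen, (hmod j h1 h2).1,
            (hmod j h1 h2).2, if_neg (by omega), if_pos (Nat.even_iff.mp hqpar),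
            hgetD _ (by omega) (by omega), hblk j h1 h2]
        · right
          intro j h1 h2
          rw [hcompute j h1 h2, convEntry_def, hYlen, (hmod j h1 h2).1,
            (hmod j h1 h2).2, if_neg (by omega), if_pos (Nat.even_iff.mp hqpar),
            hgetD _ (by omega) (by omega), hblk j h1 h2]
      · -- q odd : reversed block r' of Y
        set r' := a - 1 - r with hr'def
        have hr' : r' < a := by omega
        have hr'M : r' * M ≤ (a - 1) * M := Nat.mul_le_mul_right _ (by omega)
        have hsub : ∀ j, 1 ≤ j → j ≤ M - 1 →
            P - (r * M + j) = r' * M + (M - j) := by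
          intro j h1 h2
          have hx : r * M + r' * M + M = P := by
            have h' : (r + r' + 1) * M = a * M := by
              congr 1
              omega
            calc r * M + r' * M + M = (r + r' + 1) * M := by ring
            _ = a * M := h'
          omega
        rcases ih r' hr' with hblk | hblk
        · right
          intro j h1 h2
          rw [hcompute j h1 h2, convEntry_def, hYlen, (hmod j h1 h2).1,
            (hmod j h1 h2).2, if_neg (by omega),
            if_neg (by rw [Nat.odd_iff.mp hqpar]; omega),
            hsub j h1 h2, hgetD _ (by omega) (by omega),
            hblk (M - j) (by omega) (by omega)]
        · left
          intro j h1 h2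
          rw [hcompute j h1 h2, convEntry_def, hYlen, (hmod j h1 h2).1,
            (hmod j h1 h2).2, if_neg (by omega),
            if_neg (by rw [Nat.odd_iff.mp hqpar]; omega),
            hsub j h1 h2, hgetD _ (by omega) (by omega),
            hblk (M - j) (by omega) (by omega)]
          have hMj : M - (M - j) = j := by omega
          rw [hMj, neg_neg]

lemma block (S : List ℤ) (hne : S ≠ []) (n : ℕ) (k : ℕ) :
    (∀ j, 1 ≤ j → j ≤ (S.length + 1) ^ (n + 1) - 1 →
       foldInf S (k * (S.length + 1) ^ (n + 1) + j) = foldInf S j) ∨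
    (∀ j, 1 ≤ j → j ≤ (S.length + 1) ^ (n + 1) - 1 →
       foldInf S (k * (S.length + 1) ^ (n + 1) + j) =
         -foldInf S ((S.length + 1) ^ (n + 1) - j)) := by
  apply block_aux S hne n (k + 1) k
  calc k < 2 ^ k := Nat.lt_two_pow_self
  _ ≤ 2 ^ (k + 1) := Nat.pow_le_pow_right (by omega) (by omega)
  _ ≤ (S.length + 1) ^ (k + 1) := Nat.pow_le_pow_left (two_le_m S hne) _
/-! ### The curve associated to `S^{∗∞}` -/

/-- direction sequence of the canonical `S^{∗∞}`-curve -/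
def dirN (S : List ℤ) : ℕ → Pt
  | 0 => (1, 0)
  | t + 1 => rotBy (foldInf S t) (dirN S t)

/-- vertex sequence of the canonical `S^{∗∞}`-curve -/
def vtxN (S : List ℤ) : ℕ → Pt
  | 0 => (0, 0)
  | t + 1 => vtxN S t + dirN S t

lemma dirN_unit (S : List ℤ) (t : ℕ) : IsUnitVec (dirN S t) := by
  induction t with
  | zero => exact Or.inl rfl
  | succ t ih => exact rotBy_unit _ ih

lemma Ici_isInterval : ∀ ⦃a b c : ℤ⦄, a ∈ Set.Ici (1:ℤ) → c ∈ Set.Ici (1:ℤ) →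
    a ≤ b → b ≤ c → b ∈ Set.Ici (1:ℤ) := by
  intro a b c ha _ hab _
  exact le_trans ha hab

lemma vtxN_toNat_step (S : List ℤ) (k : ℤ) (hk : 0 ≤ k) :
    vtxN S ((k + 1).toNat) - vtxN S k.toNat = dirN S k.toNat := by
  have h1 : (k + 1).toNat = k.toNat + 1 := by omega
  rw [h1]
  show vtxN S k.toNat + dirN S k.toNat - vtxN S k.toNat = dirN S k.toNat
  abel

/-- The canonical one-sided curve associated to `S^{∗∞}`. -/
def Cinf (S : List ℤ) : Curve where
  dom := Set.Ici 1
  isInterval := Ici_isInterval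
  nontrivial := ⟨1, by norm_num, by norm_num⟩
  vertex := fun k => vtxN S k.toNat
  step := by
    intro k hk _
    have hk0 : 0 ≤ k := by
      have : (1:ℤ) ≤ k := hk
      omega
    rw [vtxN_toNat_step S k hk0]
    exact dirN_unit S k.toNat
  turn := by
    intro k hk hk2
    have hk0 : 0 ≤ k := by
      have : (1:ℤ) ≤ k := hk
      omega
    have e1 : k + 2 = (k + 1) + 1 := by ring
    rw [e1, vtxN_toNat_step S (k+1) (by omega), vtxN_toNat_step S k hk0]
    have h1 : (k + 1).toNat = k.toNat + 1 := by omega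
    rw [h1]
    show rotBy (foldInf S k.toNat) (dirN S k.toNat) = _ ∨
      rotBy (foldInf S k.toNat) (dirN S k.toNat) = _
    exact rotBy_or _ _

lemma Cinf_assoc (S : List ℤ) : (Cinf S).AssocSeq (fun k => foldInf S k.toNat) := by
  intro k hk _
  have hk0 : 0 ≤ k := by
    have : (1:ℤ) ≤ k := hk
    omega
  show vtxN S ((k+2).toNat) - vtxN S ((k+1).toNat) =
    rotBy (foldInf S k.toNat) (vtxN S ((k+1).toNat) - vtxN S k.toNat)
  have e1 : k + 2 = (k + 1) + 1 := by ring
  rw [e1, vtxN_toNat_step S (k+1) (by omega), vtxN_toNat_step S k hk0]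
  have h1 : (k + 1).toNat = k.toNat + 1 := by omega
  rw [h1]
  rfl

lemma Cinf_infS (S : List ℤ) : IsInfSCurve S (Cinf S) := ⟨rfl, Cinf_assoc S⟩

lemma Cinf_vertex (S : List ℤ) (k : ℤ) : (Cinf S).vertex k = vtxN S k.toNat := rfl

/-! ### Congruence of curve windows with matching turn words -/

lemma match_fwd (C D : Curve) (hC : C.dom = Set.univ) (b f : ℤ → ℤ)
    (hCb : C.AssocSeq b) (hDf : D.AssocSeq f) (a a' : ℤ) (R : ℕ)
    (hdom : ∀ t : ℕ, t ≤ R + 1 → a' + (t : ℤ) ∈ D.dom)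
    (hmatch : ∀ t : ℕ, t < R → b (a + (t : ℤ)) = f (a' + (t : ℤ))) :
    ∃ u v : Pt, IsUnitVec u ∧ ∀ t : ℕ, t ≤ R + 1 →
      C.vertex (a + (t : ℤ)) = cmul u (D.vertex (a' + (t : ℤ))) + v := by
  have hCuniv : ∀ z : ℤ, z ∈ C.dom := fun z => by rw [hC]; trivial
  -- directions
  have hCstep : ∀ t : ℕ, IsUnitVec (C.vertex (a + (t:ℤ) + 1) - C.vertex (a + (t:ℤ))) :=
    fun t => C.step _ (hCuniv _) (hCuniv _)
  have hDstep : IsUnitVec (D.vertex (a' + 1) - D.vertex a') := by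
    have h0 := hdom 0 (by omega)
    have h1 := hdom 1 (by omega)
    simp only [Nat.cast_zero, add_zero] at h0
    simp only [Nat.cast_one] at h1
    have := D.step a' h0 h1
    simpa using this
  obtain ⟨u, hu, huf⟩ := exists_unit_factor hDstep (by simpa using hCstep 0)
  have hdir : ∀ t : ℕ, t ≤ R →
      C.vertex (a + (t:ℤ) + 1) - C.vertex (a + (t:ℤ)) =
        cmul u (D.vertex (a' + (t:ℤ) + 1) - D.vertex (a' + (t:ℤ))) := by
    intro t ht
    induction t with
    | zero => simpa using huf
    | succ t iht =>
        have ht' : t ≤ R := by omega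
        have htR : t < R := by omega
        have e1 : a + (↑(t+1):ℤ) + 1 = (a + (t:ℤ)) + 2 := by push_cast; ring
        have e2 : a + (↑(t+1):ℤ) = (a + (t:ℤ)) + 1 := by push_cast; ring
        have e3 : a' + (↑(t+1):ℤ) + 1 = (a' + (t:ℤ)) + 2 := by push_cast; ring
        have e4 : a' + (↑(t+1):ℤ) = (a' + (t:ℤ)) + 1 := by push_cast; ring
        rw [e1, e2, e3, e4]
        rw [hCb (a + (t:ℤ)) (hCuniv _) (hCuniv _)]
        have hDassoc := hDf (a' + (t:ℤ)) (by
            have := hdom t (by omega)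
            simpa using this)
          (by
            have := hdom (t + 2) (by omega)
            have e : a' + (↑(t+2):ℤ) = a' + (t:ℤ) + 2 := by push_cast; ring
            rwa [e] at this)
        rw [hDassoc, hmatch t htR, iht ht', rotBy_cmul]
  -- vertices
  refine ⟨u, C.vertex a - cmul u (D.vertex a'), hu, ?_⟩
  intro t ht
  induction t with
  | zero => simp
  | succ t iht =>
      have ht' : t ≤ R + 1 := by omega
      have htR : t ≤ R := by omega
      have e2 : a + (↑(t+1):ℤ) = (a + (t:ℤ)) + 1 := by push_cast; ring
      have e4 : a' + (↑(t+1):ℤ) = (a' + (t:ℤ)) + 1 := by push_cast; ring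
      rw [e2, e4]
      have hstep := hdir t htR
      have := iht ht'
      have goal : C.vertex (a + (t:ℤ) + 1) =
          C.vertex (a + (t:ℤ)) +
            cmul u (D.vertex (a' + (t:ℤ) + 1) - D.vertex (a' + (t:ℤ))) := by
        rw [← hstep]; abel
      rw [goal, this, cmul_sub']
      abel

lemma match_bwd (C D : Curve) (hC : C.dom = Set.univ) (b f : ℤ → ℤ)
    (hCb : C.AssocSeq b) (hDf : D.AssocSeq f)
    (hfpm : ∀ k : ℤ, f k = 1 ∨ f k = -1) (a a' : ℤ) (R : ℕ)
    (hdom : ∀ t : ℕ, t ≤ R + 1 → a' - (t : ℤ) ∈ D.dom)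
    (hmatch : ∀ t : ℕ, t < R → b (a + (t : ℤ)) = -f (a' - (t : ℤ) - 2)) :
    ∃ u v : Pt, IsUnitVec u ∧ ∀ t : ℕ, t ≤ R + 1 →
      C.vertex (a + (t : ℤ)) = cmul u (D.vertex (a' - (t : ℤ))) + v := by
  have hCuniv : ∀ z : ℤ, z ∈ C.dom := fun z => by rw [hC]; trivial
  have hCstep : ∀ t : ℕ, IsUnitVec (C.vertex (a + (t:ℤ) + 1) - C.vertex (a + (t:ℤ))) :=
    fun t => C.step _ (hCuniv _) (hCuniv _)
  have hDstep : IsUnitVec (D.vertex (a' - 1) - D.vertex a') := by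
    have h0 := hdom 0 (by omega)
    have h1 := hdom 1 (by omega)
    simp only [Nat.cast_zero, sub_zero] at h0
    simp only [Nat.cast_one] at h1
    have hs := D.step (a' - 1) h1 (by
      have e : a' - 1 + 1 = a' := by ring
      rw [e]; exact h0)
    have e : a' - 1 + 1 = a' := by ring
    rw [e] at hs
    have := unit_neg hs
    simpa using this
  obtain ⟨u, hu, huf⟩ := exists_unit_factor hDstep (by simpa using hCstep 0)
  have hdir : ∀ t : ℕ, t ≤ R →
      C.vertex (a + (t:ℤ) + 1) - C.vertex (a + (t:ℤ)) =
        cmul u (D.vertex (a' - (t:ℤ) - 1) - D.vertex (a' - (t:ℤ))) := by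
    intro t ht
    induction t with
    | zero => simpa using huf
    | succ t iht =>
        have ht' : t ≤ R := by omega
        have htR : t < R := by omega
        have e1 : a + (↑(t+1):ℤ) + 1 = (a + (t:ℤ)) + 2 := by push_cast; ring
        have e2 : a + (↑(t+1):ℤ) = (a + (t:ℤ)) + 1 := by push_cast; ring
        rw [e1, e2, hCb (a + (t:ℤ)) (hCuniv _) (hCuniv _), hmatch t htR,
          iht ht']
        have hDassoc := hDf (a' - (t:ℤ) - 2) (by
            have := hdom (t + 2) (by omega)
            have e : a' - (↑(t+2):ℤ) = a' - (t:ℤ) - 2 := by push_cast; ring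
            rwa [e] at this)
          (by
            have := hdom t (by omega)
            have e : a' - (t:ℤ) - 2 + 2 = a' - (t:ℤ) := by ring
            rwa [e])
        have e5 : a' - (t:ℤ) - 2 + 2 = a' - (t:ℤ) := by ring
        have e6 : a' - (t:ℤ) - 2 + 1 = a' - (t:ℤ) - 1 := by ring
        rw [e5, e6] at hDassoc
        -- hDassoc : D.vertex (a'-t) - D.vertex (a'-t-1) = rotBy (f (a'-t-2)) (D.vertex (a'-t-1) - D.vertex (a'-t-2))
        have hinv : rotBy (-f (a' - (t:ℤ) - 2))
            (D.vertex (a' - (t:ℤ) - 1) - D.vertex (a' - (t:ℤ))) =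
            D.vertex (a' - (t:ℤ) - 2) - D.vertex (a' - (t:ℤ) - 1) := by
          have : D.vertex (a' - (t:ℤ) - 1) - D.vertex (a' - (t:ℤ)) =
              -(rotBy (f (a' - (t:ℤ) - 2))
                (D.vertex (a' - (t:ℤ) - 1) - D.vertex (a' - (t:ℤ) - 2))) := by
            rw [← hDassoc]; abel
          rw [this, rotBy_neg_vec, rotBy_cancel (hfpm _)]
          abel
        rw [rotBy_cmul, hinv]
        have e7 : a' - (↑(t+1):ℤ) - 1 = a' - (t:ℤ) - 2 := by push_cast; ring
        have e8 : a' - (↑(t+1):ℤ) = a' - (t:ℤ) - 1 := by push_cast; ring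
        rw [e7, e8]
  refine ⟨u, C.vertex a - cmul u (D.vertex a'), hu, ?_⟩
  intro t ht
  induction t with
  | zero => simp
  | succ t iht =>
      have ht' : t ≤ R + 1 := by omega
      have htR : t ≤ R := by omega
      have e2 : a + (↑(t+1):ℤ) = (a + (t:ℤ)) + 1 := by push_cast; ring
      have e8 : a' - (↑(t+1):ℤ) = a' - (t:ℤ) - 1 := by push_cast; ring
      rw [e2, e8]
      have hstep := hdir t htR
      have goal : C.vertex (a + (t:ℤ) + 1) =
          C.vertex (a + (t:ℤ)) +
            cmul u (D.vertex (a' - (t:ℤ) - 1) - D.vertex (a' - (t:ℤ))) := by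
        rw [← hstep]; abel
      rw [goal, iht ht', cmul_sub']
      abel
/-! ### Self-avoidance of complete `S`-folding curves -/

lemma sameSeg_symm {C : Curve} {k l : ℤ} (h : SameSeg C k C l) : SameSeg C l C k := by
  rcases h with ⟨h1, h2⟩ | ⟨h1, h2⟩
  · exact Or.inl ⟨h1.symm, h2.symm⟩
  · exact Or.inr ⟨h2.symm, h1.symm⟩

lemma selfavoiding_of_SFolding (S : List ℤ) (hS : IsFoldingString S) (hne : S ≠ [])
    (h1 : Prop1 S) (C : Curve) (hc : IsCompleteSFoldingCurve S C) :
    C.SelfAvoiding := by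
  obtain ⟨hcomp, b, hAs, hseq⟩ := hc
  have main : ∀ k l : ℤ, k < l → SameSeg C k C l → False := by
    intro k l hkl hsame
    set L : ℕ := (l - k).toNat with hLdef
    have hL1 : 1 ≤ L := by omega
    have hlL : l = k + (L : ℤ) := by omega
    obtain ⟨j, hj, hw⟩ := hseq k L
    obtain ⟨u, v, hu, hrel⟩ := match_fwd C (Cinf S) hcomp b
      (fun t => foldInf S t.toNat) hAs (Cinf_assoc S) k (j : ℤ) L
      (by
        intro t ht
        show (1:ℤ) ≤ (j:ℤ) + (t:ℤ)
        omega)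
      (by
        intro t ht
        have := hw t ht
        have he : (((j:ℤ) + (t:ℤ)).toNat) = j + t := by omega
        simpa [he] using this)
    have h0 := hrel 0 (by omega)
    have h1' := hrel 1 (by omega)
    have hLr := hrel L (by omega)
    have hL1r := hrel (L + 1) (by omega)
    simp only [Nat.cast_zero, add_zero, Nat.cast_one, Nat.cast_add] at h0 h1' hLr hL1r
    have hl1 : l + 1 = k + ((L:ℤ) + 1) := by omega
    have hsa := h1 (Cinf S) (Cinf_infS S)
    have hseg1 : (Cinf S).HasSeg (j:ℤ) := by
      constructor
      · show (1:ℤ) ≤ (j:ℤ); omega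
      · show (1:ℤ) ≤ (j:ℤ) + 1; omega
    have hseg2 : (Cinf S).HasSeg ((j:ℤ) + (L:ℤ)) := by
      constructor
      · show (1:ℤ) ≤ (j:ℤ) + (L:ℤ); omega
      · show (1:ℤ) ≤ (j:ℤ) + (L:ℤ) + 1; omega
    have hcontra : (j:ℤ) = (j:ℤ) + (L:ℤ) := by
      apply hsa _ _ hseg1 hseg2
      rcases hsame with ⟨e1, e2⟩ | ⟨e1, e2⟩
      · left
        constructor
        · apply cmul_inj hu
          have := e1
          rw [h0, hlL, hLr] at this
          exact add_right_cancel this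
        · apply cmul_inj hu
          have := e2
          rw [hl1] at this
          have e3 : k + 1 = k + (1:ℤ) := rfl
          rw [h1', hL1r] at this
          have e4 : (j:ℤ) + 1 = (j:ℤ) + 1 := rfl
          have := add_right_cancel this
          convert this using 2
          rw [add_assoc]
      · right
        constructor
        · apply cmul_inj hu
          have := e1
          rw [h0, hl1, hL1r] at this
          have := add_right_cancel this
          convert this using 2
          rw [add_assoc]
        · apply cmul_inj hu
          have := e2
          rw [h1', hlL, hLr] at this
          exact add_right_cancel this
    omega
  intro k l hk hl hsame
  rcases lt_trichotomy k l with h | h | h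
  · exact absurd hsame (fun hs => main k l h hs)
  · exact h
  · exact absurd (sameSeg_symm hsame) (fun hs => main l k h hs)
/-! ### Transporting a covered square through a direct isometry -/

lemma covers_square_of_affine (C : Curve) (hcomp : C.dom = Set.univ) (u v z : Pt)
    (msz : ℕ) (hu : IsUnitVec u)
    (hAll : ∀ c e' : Pt, (e' = (1,0) ∨ e' = (0,1)) →
      z.1 ≤ c.1 → c.1 + e'.1 ≤ z.1 + msz → z.2 ≤ c.2 → c.2 + e'.2 ≤ z.2 + msz →
      ∃ κ : ℤ, (C.vertex κ = cmul u c + v ∧ C.vertex (κ + 1) = cmul u (c + e') + v) ∨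
        (C.vertex κ = cmul u (c + e') + v ∧ C.vertex (κ + 1) = cmul u c + v)) :
    ∃ z' : Pt, CoversSquare C z' msz := by
  have hseg : ∀ κ : ℤ, C.HasSeg κ := fun κ => ⟨by rw [hcomp]; trivial, by rw [hcomp]; trivial⟩
  have mk : ∀ (a b : Pt) (κ : ℤ),
      ((C.vertex κ = a ∧ C.vertex (κ + 1) = b) ∨
       (C.vertex κ = b ∧ C.vertex (κ + 1) = a)) → SegOfCurve C a b := by
    intro a b κ h
    exact ⟨κ, hseg κ, h⟩
  rcases hu with hu | hu | hu | hu <;> subst hu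
  · -- u = (1,0) : φ w = w + v
    refine ⟨(z.1 + v.1, z.2 + v.2), ?_⟩
    intro a e he hb1 hb2 hb3 hb4
    simp only at hb1 hb2 hb3 hb4
    set c : Pt := (a.1 - v.1, a.2 - v.2) with hc
    rcases he with rfl | rfl
    · obtain ⟨κ, hk⟩ := hAll c (1,0) (Or.inl rfl) (by simp +zetaDelta at hb1 hb2 ⊢; omega)
        (by simp +zetaDelta at hb1 hb2 ⊢; omega) (by simp +zetaDelta at hb3 hb4 ⊢; omega)
        (by simp +zetaDelta at hb3 hb4 ⊢; omega)
      have h1 : cmul (1,0) c + v = a := by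
        simp +zetaDelta [cmul, Prod.ext_iff]
      have h2 : cmul (1,0) (c + (1,0)) + v = a + (1,0) := by
        simp +zetaDelta [cmul, Prod.ext_iff] <;> omega
      rw [h1, h2] at hk
      exact mk _ _ κ hk
    · obtain ⟨κ, hk⟩ := hAll c (0,1) (Or.inr rfl) (by simp +zetaDelta at hb1 hb2 ⊢; omega)
        (by simp +zetaDelta at hb1 hb2 ⊢; omega) (by simp +zetaDelta at hb3 hb4 ⊢; omega)
        (by simp +zetaDelta at hb3 hb4 ⊢; omega)
      have h1 : cmul (1,0) c + v = a := by
        simp +zetaDelta [cmul, Prod.ext_iff]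
      have h2 : cmul (1,0) (c + (0,1)) + v = a + (0,1) := by
        simp +zetaDelta [cmul, Prod.ext_iff] <;> omega
      rw [h1, h2] at hk
      exact mk _ _ κ hk
  · -- u = (-1,0) : φ w = -w + v
    refine ⟨(v.1 - z.1 - msz, v.2 - z.2 - msz), ?_⟩
    intro a e he hb1 hb2 hb3 hb4
    simp only at hb1 hb2 hb3 hb4
    set c : Pt := (v.1 - a.1 - e.1, v.2 - a.2 - e.2) with hc
    have hkey : ∃ κ : ℤ,
        (C.vertex κ = cmul (-1,0) c + v ∧ C.vertex (κ + 1) = cmul (-1,0) (c + e) + v) ∨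
        (C.vertex κ = cmul (-1,0) (c + e) + v ∧ C.vertex (κ + 1) = cmul (-1,0) c + v) := by
      rcases he with rfl | rfl
      · exact hAll c (1,0) (Or.inl rfl) (by simp +zetaDelta at hb1 hb2 ⊢; omega)
          (by simp +zetaDelta at hb1 hb2 ⊢; omega) (by simp +zetaDelta at hb3 hb4 ⊢; omega)
          (by simp +zetaDelta at hb3 hb4 ⊢; omega)
      · exact hAll c (0,1) (Or.inr rfl) (by simp +zetaDelta at hb1 hb2 ⊢; omega)
          (by simp +zetaDelta at hb1 hb2 ⊢; omega) (by simp +zetaDelta at hb3 hb4 ⊢; omega)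
          (by simp +zetaDelta at hb3 hb4 ⊢; omega)
    obtain ⟨κ, hk⟩ := hkey
    have h1 : cmul (-1,0) c + v = a + e := by
      simp +zetaDelta [cmul, Prod.ext_iff] <;> omega
    have h2 : cmul (-1,0) (c + e) + v = a := by
      simp +zetaDelta [cmul, Prod.ext_iff] <;> omega
    rw [h1, h2] at hk
    refine mk _ _ κ ?_
    tauto
  · -- u = (0,1) : φ w = (v.1 - w.2, v.2 + w.1)
    refine ⟨(v.1 - z.2 - msz, v.2 + z.1), ?_⟩
    intro a e he hb1 hb2 hb3 hb4
    simp only at hb1 hb2 hb3 hb4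
    rcases he with rfl | rfl
    · set c : Pt := (a.2 - v.2, v.1 - a.1 - 1) with hc
      obtain ⟨κ, hk⟩ := hAll c (0,1) (Or.inr rfl) (by simp +zetaDelta at hb3 hb4 ⊢; omega)
        (by simp +zetaDelta at hb3 hb4 ⊢; omega) (by simp +zetaDelta at hb1 hb2 ⊢; omega)
        (by simp +zetaDelta at hb1 hb2 ⊢; omega)
      have h1 : cmul (0,1) c + v = a + (1,0) := by
        simp +zetaDelta [cmul, Prod.ext_iff] <;> omega
      have h2 : cmul (0,1) (c + (0,1)) + v = a := by
        simp +zetaDelta [cmul, Prod.ext_iff] <;> omega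
      rw [h1, h2] at hk
      refine mk _ _ κ ?_
      tauto
    · set c : Pt := (a.2 - v.2, v.1 - a.1) with hc
      obtain ⟨κ, hk⟩ := hAll c (1,0) (Or.inl rfl) (by simp +zetaDelta at hb3 hb4 ⊢; omega)
        (by simp +zetaDelta at hb3 hb4 ⊢; omega) (by simp +zetaDelta at hb1 hb2 ⊢; omega)
        (by simp +zetaDelta at hb1 hb2 ⊢; omega)
      have h1 : cmul (0,1) c + v = a := by
        simp +zetaDelta [cmul, Prod.ext_iff] <;> omega
      have h2 : cmul (0,1) (c + (1,0)) + v = a + (0,1) := by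
        simp +zetaDelta [cmul, Prod.ext_iff] <;> omega
      rw [h1, h2] at hk
      exact mk _ _ κ hk
  · -- u = (0,-1) : φ w = (v.1 + w.2, v.2 - w.1)
    refine ⟨(v.1 + z.2, v.2 - z.1 - msz), ?_⟩
    intro a e he hb1 hb2 hb3 hb4
    simp only at hb1 hb2 hb3 hb4
    rcases he with rfl | rfl
    · set c : Pt := (v.2 - a.2, a.1 - v.1) with hc
      obtain ⟨κ, hk⟩ := hAll c (0,1) (Or.inr rfl) (by simp +zetaDelta at hb3 hb4 ⊢; omega)
        (by simp +zetaDelta at hb3 hb4 ⊢; omega) (by simp +zetaDelta at hb1 hb2 ⊢; omega)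
        (by simp +zetaDelta at hb1 hb2 ⊢; omega)
      have h1 : cmul (0,-1) c + v = a := by
        simp +zetaDelta [cmul, Prod.ext_iff] <;> omega
      have h2 : cmul (0,-1) (c + (0,1)) + v = a + (1,0) := by
        simp +zetaDelta [cmul, Prod.ext_iff] <;> omega
      rw [h1, h2] at hk
      exact mk _ _ κ hk
    · set c : Pt := (v.2 - a.2 - 1, a.1 - v.1) with hc
      obtain ⟨κ, hk⟩ := hAll c (1,0) (Or.inl rfl) (by simp +zetaDelta at hb3 hb4 ⊢; omega)
        (by simp +zetaDelta at hb3 hb4 ⊢; omega) (by simp +zetaDelta at hb1 hb2 ⊢; omega)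
        (by simp +zetaDelta at hb1 hb2 ⊢; omega)
      have h1 : cmul (0,-1) c + v = a + (0,1) := by
        simp +zetaDelta [cmul, Prod.ext_iff] <;> omega
      have h2 : cmul (0,-1) (c + (1,0)) + v = a := by
        simp +zetaDelta [cmul, Prod.ext_iff] <;> omega
      rw [h1, h2] at hk
      refine mk _ _ κ ?_
      tauto
/-! ### Covering arbitrarily large squares -/

lemma covers_of_SFolding (S : List ℤ) (hS : IsFoldingString S) (hne : S ≠ [])
    (h2 : Prop2 S) (C : Curve) (hc : IsCompleteSFoldingCurve S C) :
    CoversArbLargeSquares C := by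
  classical
  obtain ⟨hcomp, b, hAs, hseq⟩ := hc
  intro msz hmsz
  obtain ⟨z, hcov⟩ := h2 (Cinf S) (Cinf_infS S) msz hmsz
  -- every unit segment of the square is a segment of `Cinf S` at some index `k ≥ 1`
  have hEx : ∀ q : Pt × Pt, (q.2 = (1,0) ∨ q.2 = (0,1)) → z.1 ≤ q.1.1 →
      q.1.1 + q.2.1 ≤ z.1 + msz → z.2 ≤ q.1.2 → q.1.2 + q.2.2 ≤ z.2 + msz →
      ∃ k : ℤ, 1 ≤ k ∧
        (((Cinf S).vertex k = q.1 ∧ (Cinf S).vertex (k+1) = q.1 + q.2) ∨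
         ((Cinf S).vertex k = q.1 + q.2 ∧ (Cinf S).vertex (k+1) = q.1)) := by
    intro q hq hq1 hq2 hq3 hq4
    obtain ⟨k, hkseg, hends⟩ := hcov q.1 q.2 hq hq1 hq2 hq3 hq4
    exact ⟨k, hkseg.1, hends⟩
  -- a uniform bound on the indices needed
  let Q : Finset (ℤ × ℤ) := Finset.Icc z.1 (z.1 + (msz:ℤ)) ×ˢ Finset.Icc z.2 (z.2 + (msz:ℤ))
  let E : Finset Pt := {((1:ℤ),(0:ℤ)), ((0:ℤ),(1:ℤ))}
  let F : Pt × Pt → ℕ := fun q =>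
    if h : ∃ k : ℤ, 1 ≤ k ∧
        (((Cinf S).vertex k = q.1 ∧ (Cinf S).vertex (k+1) = q.1 + q.2) ∨
         ((Cinf S).vertex k = q.1 + q.2 ∧ (Cinf S).vertex (k+1) = q.1))
      then h.choose.toNat else 0
  set N : ℕ := (Q ×ˢ E).sup F with hNdef
  have hkey : ∀ c e : Pt, (e = (1,0) ∨ e = (0,1)) → z.1 ≤ c.1 →
      c.1 + e.1 ≤ z.1 + msz → z.2 ≤ c.2 → c.2 + e.2 ≤ z.2 + msz →
      ∃ k : ℤ, 1 ≤ k ∧ k ≤ (N:ℤ) ∧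
        (((Cinf S).vertex k = c ∧ (Cinf S).vertex (k+1) = c + e) ∨
         ((Cinf S).vertex k = c + e ∧ (Cinf S).vertex (k+1) = c)) := by
    intro c e he hc1 hc2 hc3 hc4
    have hex := hEx (c, e) he hc1 hc2 hc3 hc4
    have hqQ : ((c, e) : Pt × Pt) ∈ Q ×ˢ E := by
      rw [Finset.mem_product]
      constructor
      · show c ∈ Q
        rw [Finset.mem_product]
        constructor <;> rw [Finset.mem_Icc] <;>
          rcases he with rfl | rfl <;> simp at hc2 hc4 ⊢ <;> omega
      · show e ∈ E
        rcases he with rfl | rfl <;> simp [E]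
    have hF : F (c, e) = hex.choose.toNat := dif_pos hex
    have hle : F (c, e) ≤ N := by
      rw [hNdef]
      exact Finset.le_sup hqQ
    obtain ⟨hk1, hk2⟩ := hex.choose_spec
    exact ⟨hex.choose, hk1, by omega, hk2⟩
  -- window size
  set M := (S.length + 1) ^ (N + 1) with hMdef
  have hM2 : 2 ≤ M := two_le_pow S hne N
  have hNM : N < M := lt_pow_self' S hne N
  have hNMz : (N:ℤ) < (M:ℤ) := by exact_mod_cast hNM
  -- locate a block of `S^{∗∞}` inside `b`
  obtain ⟨j, hjpos, hw⟩ := hseq 0 (2 * M)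
  set K := j / M + 1 with hKdef
  have hdm := Nat.div_add_mod j M
  have hKM : K * M = M * (j / M) + M := by rw [hKdef]; ring
  have hmodM : j % M < M := Nat.mod_lt _ (by omega)
  set p0 : ℕ := K * M - j with hp0def
  have hp01 : 1 ≤ p0 := by omega
  have hp0M : p0 ≤ M := by omega
  have hjp0 : j + p0 = K * M := by omega
  have hblockw : ∀ t : ℕ, 1 ≤ t → t ≤ M - 1 →
      b ((p0:ℤ) + (t:ℤ)) = foldInf S (K * M + t) := by
    intro t ht1 ht2
    have h := hw (p0 + t) (by omega)
    have e0 : (0:ℤ) + ((p0 + t : ℕ):ℤ) = (p0:ℤ) + (t:ℤ) := by push_cast; ring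
    rw [e0] at h
    rw [h]
    congr 1
    omega
  have hfpm : ∀ k : ℤ, (fun t : ℤ => foldInf S t.toNat) k = 1 ∨
      (fun t : ℤ => foldInf S t.toNat) k = -1 := fun k => foldInf_pm S hS hne _
  -- the matching window
  have hseg : ∃ u v : Pt, IsUnitVec u ∧ ∀ kk : ℤ, 1 ≤ kk → kk ≤ (M:ℤ) →
      ∃ κ : ℤ,
        (C.vertex κ = cmul u ((Cinf S).vertex kk) + v ∧
          C.vertex (κ+1) = cmul u ((Cinf S).vertex (kk+1)) + v) ∨
        (C.vertex κ = cmul u ((Cinf S).vertex (kk+1)) + v ∧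
          C.vertex (κ+1) = cmul u ((Cinf S).vertex kk) + v) := by
    rcases block S hne N K with hblk | hblk
    · -- forward copy
      obtain ⟨u, v, hu, hrel⟩ := match_fwd C (Cinf S) hcomp b
        (fun t : ℤ => foldInf S t.toNat) hAs (Cinf_assoc S) ((p0:ℤ) + 1) 1 (M - 1)
        (fun t _ => by show (1:ℤ) ≤ 1 + (t:ℤ); omega)
        (by
          intro t ht
          show b ((p0:ℤ) + 1 + (t:ℤ)) = foldInf S (((1:ℤ) + (t:ℤ)).toNat)
          have hb1 : b ((p0:ℤ) + ((t+1:ℕ):ℤ)) = foldInf S (K * M + (t+1)) :=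
            hblockw (t+1) (by omega) (by omega)
          have hb2 : foldInf S (K * M + (t+1)) = foldInf S (t+1) :=
            hblk (t+1) (by omega) (by omega)
          have e1 : (p0:ℤ) + 1 + (t:ℤ) = (p0:ℤ) + ((t+1:ℕ):ℤ) := by push_cast; ring
          have e2 : ((1:ℤ) + (t:ℤ)).toNat = t + 1 := by omega
          rw [e1, hb1, hb2, e2])
      refine ⟨u, v, hu, ?_⟩
      have hrelZ : ∀ w : ℤ, 0 ≤ w → w ≤ (M:ℤ) →
          C.vertex ((p0:ℤ) + 1 + w) = cmul u ((Cinf S).vertex (1 + w)) + v := by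
        intro w h0 hM'
        have h := hrel w.toNat (by omega)
        have e : ((w.toNat:ℕ):ℤ) = w := by omega
        rw [e] at h
        exact h
      intro kk hk1 hk2
      refine ⟨(p0:ℤ) + kk, Or.inl ⟨?_, ?_⟩⟩
      · have h := hrelZ (kk - 1) (by omega) (by omega)
        have e1 : (p0:ℤ) + 1 + (kk - 1) = (p0:ℤ) + kk := by ring
        have e2 : (1:ℤ) + (kk - 1) = kk := by ring
        rw [e1, e2] at h
        exact h
      · have h := hrelZ kk (by omega) (by omega)
        have e1 : (p0:ℤ) + 1 + kk = (p0:ℤ) + kk + 1 := by ring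
        have e2 : (1:ℤ) + kk = kk + 1 := by ring
        rw [e1, e2] at h
        exact h
    · -- reversed copy
      obtain ⟨u, v, hu, hrel⟩ := match_bwd C (Cinf S) hcomp b
        (fun t : ℤ => foldInf S t.toNat) hAs (Cinf_assoc S) hfpm
        ((p0:ℤ) + 1) ((M:ℤ) + 1) (M - 1)
        (fun t ht => by show (1:ℤ) ≤ (M:ℤ) + 1 - (t:ℤ); omega)
        (by
          intro t ht
          show b ((p0:ℤ) + 1 + (t:ℤ)) = -foldInf S (((M:ℤ) + 1 - (t:ℤ) - 2).toNat)
          have hb1 : b ((p0:ℤ) + ((t+1:ℕ):ℤ)) = foldInf S (K * M + (t+1)) :=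
            hblockw (t+1) (by omega) (by omega)
          have hb2 : foldInf S (K * M + (t+1)) = -foldInf S (M - (t+1)) :=
            hblk (t+1) (by omega) (by omega)
          have e1 : (p0:ℤ) + 1 + (t:ℤ) = (p0:ℤ) + ((t+1:ℕ):ℤ) := by push_cast; ring
          have e2 : ((M:ℤ) + 1 - (t:ℤ) - 2).toNat = M - (t+1) := by omega
          rw [e1, hb1, hb2, e2])
      refine ⟨u, v, hu, ?_⟩
      have hrelZ : ∀ w : ℤ, 0 ≤ w → w ≤ (M:ℤ) →
          C.vertex ((p0:ℤ) + 1 + w) = cmul u ((Cinf S).vertex ((M:ℤ) + 1 - w)) + v := by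
        intro w h0 hM'
        have h := hrel w.toNat (by omega)
        have e : ((w.toNat:ℕ):ℤ) = w := by omega
        rw [e] at h
        exact h
      intro kk hk1 hk2
      refine ⟨(p0:ℤ) + (M:ℤ) + 1 - kk, Or.inr ⟨?_, ?_⟩⟩
      · have h := hrelZ ((M:ℤ) - kk) (by omega) (by omega)
        have e1 : (p0:ℤ) + 1 + ((M:ℤ) - kk) = (p0:ℤ) + (M:ℤ) + 1 - kk := by ring
        have e2 : (M:ℤ) + 1 - ((M:ℤ) - kk) = kk + 1 := by ring
        rw [e1, e2] at h
        exact h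
      · have h := hrelZ ((M:ℤ) + 1 - kk) (by omega) (by omega)
        have e1 : (p0:ℤ) + 1 + ((M:ℤ) + 1 - kk) = (p0:ℤ) + (M:ℤ) + 1 - kk + 1 := by ring
        have e2 : (M:ℤ) + 1 - ((M:ℤ) + 1 - kk) = kk := by ring
        rw [e1, e2] at h
        exact h
  obtain ⟨u, v, hu, hwin⟩ := hseg
  have hAll : ∀ c e' : Pt, (e' = (1,0) ∨ e' = (0,1)) →
      z.1 ≤ c.1 → c.1 + e'.1 ≤ z.1 + msz → z.2 ≤ c.2 → c.2 + e'.2 ≤ z.2 + msz →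
      ∃ κ : ℤ, (C.vertex κ = cmul u c + v ∧ C.vertex (κ + 1) = cmul u (c + e') + v) ∨
        (C.vertex κ = cmul u (c + e') + v ∧ C.vertex (κ + 1) = cmul u c + v) := by
    intro c e' he' hb1 hb2 hb3 hb4
    obtain ⟨k, hk1, hkN, hends⟩ := hkey c e' he' hb1 hb2 hb3 hb4
    obtain ⟨κ, hκ⟩ := hwin k hk1 (by omega)
    rcases hends with ⟨ha1, ha2⟩ | ⟨ha1, ha2⟩ <;> rcases hκ with ⟨hv1, hv2⟩ | ⟨hv1, hv2⟩
    · exact ⟨κ, Or.inl ⟨by rw [hv1, ha1], by rw [hv2, ha2]⟩⟩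
    · exact ⟨κ, Or.inr ⟨by rw [hv1, ha2], by rw [hv2, ha1]⟩⟩
    · exact ⟨κ, Or.inr ⟨by rw [hv1, ha1], by rw [hv2, ha2]⟩⟩
    · exact ⟨κ, Or.inl ⟨by rw [hv1, ha2], by rw [hv2, ha1]⟩⟩
  exact covers_square_of_affine C hcomp u v z msz hu hAll

/-- If the folding string `S` satisfies properties 1) and 2), then every complete
`S`-folding curve is self-avoiding and covers arbitrarily large squares. -/
theorem sfolding_selfavoiding (S : List ℤ) (hS : IsFoldingString S) (hne : S ≠ [])
    (h1 : Prop1 S) (h2 : Prop2 S) :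
    ∀ C : Curve, IsCompleteSFoldingCurve S C →
      C.SelfAvoiding ∧ CoversArbLargeSquares C := by
  intro C hc
  exact ⟨selfavoiding_of_SFolding S hS hne h1 C hc,
    covers_of_SFolding S hS hne h2 C hc⟩

end Paperfolding
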